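/- For all real η ≥ 1 and reals c ≥ a + b with a ≥ b ≥ 0: c^η ≥ a^η + (η²/(η+1))·a^{η−1}·b + (2^η − η²/(η+1) − 1)·b^η. -/

import Mathlib

open Real Set

private lemma aux_K (η : ℝ) (hη : 1 ≤ η) :
    (2:ℝ) ^ (η - 2) ≤ 2 ^ η - η ^ 2 / (η + 1) - 1 := by
  have hη1 : (0:ℝ) < η + 1 := by linarith
  have hlog : (2:ℝ)/3 ≤ Real.log 2 := by
    have := Real.log_two_gt_d9; linarith
  have hE : Real.log 2 * (η - 1) + 1 ≤ (2:ℝ) ^ (η - 1) := by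
    rw [Real.rpow_def_of_pos two_pos]
    linarith [Real.add_one_le_exp (Real.log 2 * (η - 1))]
  have h2 : (2:ℝ) ^ η = 2 ^ (η - 1) * 2 := by
    have h := Real.rpow_add_one (two_ne_zero) (η - 1)
    norm_num at h
    exact h.symm ▸ rfl
  have h3 : (2:ℝ) ^ (η - 2) = 2 ^ (η - 1) / 2 := by
    have h := Real.rpow_sub (two_pos) (η - 1) 1
    rw [Real.rpow_one] at h
    have hrw : η - 1 - 1 = η - 2 := by ring
    rw [hrw] at h
    exact h
  have hmu : η ^ 2 / (η + 1) ≤ η - 1/2 := by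
    rw [div_le_iff₀ hη1]; nlinarith
  have hE' : (2:ℝ)/3 * (η - 1) + 1 ≤ (2:ℝ) ^ (η - 1) := by
    nlinarith [hE, hlog]
  rw [h2, h3]
  linarith

set_option maxHeartbeats 1600000 in
private lemma aux_key (η t : ℝ) (hη : 1 ≤ η) (ht0 : 0 ≤ t) (ht1 : t ≤ 1) :
    1 + η ^ 2 / (η + 1) * t + (2 ^ η - η ^ 2 / (η + 1) - 1) * t ^ η ≤ (1 + t) ^ η := by
  have hηpos : (0:ℝ) < η := by linarith
  have hη1pos : (0:ℝ) < η + 1 := by linarith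
  obtain ⟨mu, hmudef⟩ : ∃ m : ℝ, m = η ^ 2 / (η + 1) := ⟨_, rfl⟩
  obtain ⟨K, hKdef⟩ : ∃ k : ℝ, k = 2 ^ η - mu - 1 := ⟨_, rfl⟩
  have hK2 : (2:ℝ) ^ (η - 2) ≤ K := by
    rw [hKdef, hmudef]; exact aux_K η hη
  have hKpos : 0 < K := lt_of_lt_of_le (Real.rpow_pos_of_pos two_pos _) hK2
  have hc₀ : η / (η + 1) < 1 := by rw [div_lt_one hη1pos]; linarith
  have hmuη : mu = η * (η / (η + 1)) := by
    rw [hmudef]; field_simp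
  obtain ⟨h, hhdef⟩ : ∃ f : ℝ → ℝ, f = fun x => (1 + x) ^ η - 1 - mu * x - K * x ^ η := ⟨_, rfl⟩
  obtain ⟨D, hDdef⟩ : ∃ f : ℝ → ℝ,
      f = fun x => η * (1 + x) ^ (η - 1) - mu - K * (η * x ^ (η - 1)) := ⟨_, rfl⟩
  obtain ⟨φ, hφdef⟩ : ∃ f : ℝ → ℝ, f = fun x => (1 + x) ^ (η - 1) - K * x ^ (η - 1) := ⟨_, rfl⟩
  obtain ⟨ψ, hψdef⟩ : ∃ f : ℝ → ℝ,
      f = fun x => (η - 1) * (1 + x) ^ (η - 2) - K * ((η - 1) * x ^ (η - 2)) := ⟨_, rfl⟩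
  have hφeval : ∀ x : ℝ, φ x = (1 + x) ^ (η - 1) - K * x ^ (η - 1) := by
    intro x; rw [hφdef]
  have hψeval : ∀ x : ℝ, ψ x = (η - 1) * (1 + x) ^ (η - 2) - K * ((η - 1) * x ^ (η - 2)) := by
    intro x; rw [hψdef]
  have hheval : ∀ x : ℝ, h x = (1 + x) ^ η - 1 - mu * x - K * x ^ η := by
    intro x; rw [hhdef]
  have hDeval : ∀ x : ℝ, D x = η * (1 + x) ^ (η - 1) - mu - K * (η * x ^ (η - 1)) := by
    intro x; rw [hDdef]
  have hder : ∀ x : ℝ, 0 ≤ x → HasDerivAt h (D x) x := by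
    intro x hx
    have hx1 : (1 + x) ≠ 0 := by positivity
    have h1 : HasDerivAt (fun y : ℝ => (1 + y) ^ η) (η * (1 + x) ^ (η - 1)) x := by
      have := (Real.hasDerivAt_rpow_const (x := 1 + x) (p := η)
        (Or.inl hx1)).comp x ((hasDerivAt_id x).const_add 1)
      simpa [Function.comp_def] using this
    have h2 : HasDerivAt (fun y : ℝ => y ^ η) (η * x ^ (η - 1)) x :=
      Real.hasDerivAt_rpow_const (Or.inr hη)
    have hcomb := ((h1.sub_const 1).sub ((hasDerivAt_id x).const_mul mu)).sub (h2.const_mul K)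
    have heq : D x = η * (1 + x) ^ (η - 1) - mu * 1 - K * (η * x ^ (η - 1)) := by
      rw [hDeval]; ring
    rw [hhdef, heq]
    exact hcomb
  have hderφ : ∀ x : ℝ, 0 < x → HasDerivAt φ (ψ x) x := by
    intro x hx
    have hx1 : (1 + x) ≠ 0 := by positivity
    have h1 : HasDerivAt (fun y : ℝ => (1 + y) ^ (η - 1))
        ((η - 1) * (1 + x) ^ (η - 1 - 1)) x := by
      have := (Real.hasDerivAt_rpow_const (x := 1 + x) (p := η - 1)
        (Or.inl hx1)).comp x ((hasDerivAt_id x).const_add 1)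
      simpa [Function.comp_def] using this
    have h2 : HasDerivAt (fun y : ℝ => y ^ (η - 1)) ((η - 1) * x ^ (η - 1 - 1)) x :=
      Real.hasDerivAt_rpow_const (Or.inl hx.ne')
    have hcomb := h1.sub (h2.const_mul K)
    have heq : ψ x = (η - 1) * (1 + x) ^ (η - 1 - 1) - K * ((η - 1) * x ^ (η - 1 - 1)) := by
      rw [hψeval, show η - 1 - 1 = η - 2 by ring]
    rw [hφdef, heq]
    exact hcomb
  have hDφ : ∀ x : ℝ, D x = η * φ x - mu := by
    intro x; rw [hDeval, hφeval]; ring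
  -- single crossing
  have hB : ∀ s y : ℝ, 0 < s → s < y → y ≤ 1 → D s ≤ 0 → D y ≤ 0 := by
    intro s y hs hsy hy1 hDs
    by_contra hDy
    push_neg at hDy
    have hφs : φ s ≤ η / (η + 1) := by
      have h1 : η * φ s ≤ mu := by rw [hDφ] at hDs; linarith
      rw [hmuη] at h1
      exact le_of_mul_le_mul_left h1 hηpos
    have hφy : η / (η + 1) < φ y := by
      have h1 : mu < η * φ y := by rw [hDφ] at hDy; linarith
      rw [hmuη] at h1
      exact lt_of_mul_lt_mul_left h1 hηpos.le
    obtain ⟨z, hz, hzslope⟩ := exists_hasDerivAt_eq_slope φ ψ hsy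
      (fun x hx => ((hderφ x (lt_of_lt_of_le hs hx.1)).continuousAt).continuousWithinAt)
      (fun x hx => hderφ x (hs.trans hx.1))
    have hzpos : 0 < z := hs.trans hz.1
    have hψz : 0 < ψ z := by
      rw [hzslope]
      exact div_pos (by linarith) (by linarith [hz.1, hz.2])
    have hη1 : 1 < η := by
      rcases eq_or_lt_of_le hη with heq | hlt
      · exfalso; rw [hψeval, ← heq] at hψz; norm_num at hψz
      · exact hlt
    have hKz : K * z ^ (η - 2) < (1 + z) ^ (η - 2) := by
      have hfac : 0 < (η - 1) * ((1 + z) ^ (η - 2) - K * z ^ (η - 2)) := by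
        rw [hψeval] at hψz; linarith
      nlinarith [hfac]
    have hzpow : (0:ℝ) < z ^ (η - 2) := Real.rpow_pos_of_pos hzpos _
    have hdivz : ((1 + z) / z) ^ (η - 2) = (1 + z) ^ (η - 2) / z ^ (η - 2) :=
      Real.div_rpow (by linarith) hzpos.le _
    rcases le_or_gt η 2 with h2 | h2
    · -- η ≤ 2 : contradiction with hKz
      have hzz : (2:ℝ) ≤ (1 + z) / z := by
        rw [le_div_iff₀ hzpos]; linarith [hz.2, hy1]
      have hle : ((1 + z) / z) ^ (η - 2) ≤ 2 ^ (η - 2) :=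
        Real.rpow_le_rpow_of_nonpos two_pos hzz (by linarith)
      have hKge : ((1 + z) / z) ^ (η - 2) ≤ K := hle.trans hK2
      rw [hdivz, div_le_iff₀ hzpow] at hKge
      linarith
    · -- η > 2
      have hφ0 : φ 0 = 1 := by
        rw [hφeval]
        rw [Real.zero_rpow (by linarith : η - 1 ≠ 0)]
        norm_num
      have hφs1 : φ s < 1 := lt_of_le_of_lt hφs hc₀
      have hcontφ : ContinuousOn φ (Icc 0 s) := by
        rw [hφdef]
        apply ContinuousOn.sub
        · exact ((Real.continuous_rpow_const (by linarith : 0 ≤ η - 1)).comp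
            (continuous_const.add continuous_id)).continuousOn
        · exact (continuous_const.mul
            (Real.continuous_rpow_const (by linarith : 0 ≤ η - 1))).continuousOn
      obtain ⟨w, hw, hwslope⟩ := exists_hasDerivAt_eq_slope φ ψ hs hcontφ
        (fun x hx => hderφ x hx.1)
      have hwpos : 0 < w := hw.1
      have hψw : ψ w < 0 := by
        rw [hwslope, hφ0, sub_zero]
        exact div_neg_of_neg_of_pos (by linarith) hs
      have hKw : (1 + w) ^ (η - 2) < K * w ^ (η - 2) := by
        have hfac : (η - 1) * ((1 + w) ^ (η - 2) - K * w ^ (η - 2)) < 0 := by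
          rw [hψeval] at hψw; linarith
        nlinarith [hfac]
      have hwz : w < z := lt_trans hw.2 hz.1
      have hwpow : (0:ℝ) < w ^ (η - 2) := Real.rpow_pos_of_pos hwpos _
      have hdivw : ((1 + w) / w) ^ (η - 2) = (1 + w) ^ (η - 2) / w ^ (η - 2) :=
        Real.div_rpow (by linarith) hwpos.le _
      have hKltz : K < ((1 + z) / z) ^ (η - 2) := by
        rw [hdivz, lt_div_iff₀ hzpow]; linarith
      have hmono : ((1 + z) / z) ^ (η - 2) ≤ ((1 + w) / w) ^ (η - 2) := by
        apply Real.rpow_le_rpow (by positivity) _ (by linarith)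
        rw [div_le_div_iff₀ hzpos hwpos]
        nlinarith
      have hlast : K < ((1 + w) / w) ^ (η - 2) := lt_of_lt_of_le hKltz hmono
      rw [hdivw, lt_div_iff₀ hwpow] at hlast
      linarith
  -- main argument
  suffices hmain : 0 ≤ h t by
    rw [hheval] at hmain
    rw [hmudef] at hmain
    rw [hKdef, hmudef] at hmain
    linarith
  have h0 : h 0 = 0 := by
    rw [hheval, Real.zero_rpow hηpos.ne']
    norm_num
  have h1eq : h 1 = 0 := by
    rw [hheval, Real.one_rpow, hKdef]
    norm_num
    ring
  rcases eq_or_lt_of_le ht0 with heq | ht0'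
  · rw [← heq, h0]
  rcases eq_or_lt_of_le ht1 with heq | ht1'
  · rw [heq, h1eq]
  by_contra hneg
  push_neg at hneg
  obtain ⟨s, hs, hsl⟩ := exists_hasDerivAt_eq_slope h D ht0'
    (fun x hx => ((hder x hx.1).continuousAt).continuousWithinAt)
    (fun x hx => hder x hx.1.le)
  obtain ⟨y, hy, hyl⟩ := exists_hasDerivAt_eq_slope h D ht1'
    (fun x hx => ((hder x (le_trans ht0 hx.1)).continuousAt).continuousWithinAt)
    (fun x hx => hder x (le_trans ht0 hx.1.le))
  have hDs : D s < 0 := by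
    rw [hsl, h0, sub_zero]
    exact div_neg_of_neg_of_pos (by linarith) (by linarith)
  have hDy : 0 < D y := by
    rw [hyl, h1eq]
    exact div_pos (by linarith) (by linarith [hy.1, hy.2])
  exact absurd (hB s y hs.1 (hs.2.trans hy.1) hy.2.le hDs.le) (not_le.mpr hDy)

theorem stmt_19 (η a b c : ℝ) (hη : 1 ≤ η) (hb : 0 ≤ b) (hab : b ≤ a)
    (hc : a + b ≤ c) :
    c ^ η ≥ a ^ η + (η ^ 2 / (η + 1)) * a ^ (η - 1) * b
      + (2 ^ η - η ^ 2 / (η + 1) - 1) * b ^ η := by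
  have hηpos : (0:ℝ) < η := by linarith
  have ha : 0 ≤ a := le_trans hb hab
  rcases eq_or_lt_of_le ha with heq | hapos
  · -- a = 0, hence b = 0
    have hb0 : b = 0 := le_antisymm (heq ▸ hab) hb
    subst hb0
    rw [← heq]
    simp [Real.zero_rpow hηpos.ne']
    exact Real.rpow_nonneg (by linarith) η
  · set t : ℝ := b / a with htdef
    have ht0 : 0 ≤ t := div_nonneg hb hapos.le
    have ht1 : t ≤ 1 := by rw [div_le_one hapos]; exact hab
    have hkey := aux_key η t hη ht0 ht1
    have hat : a * (1 + t) = a + b := by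
      rw [htdef, mul_add, mul_one, mul_div_assoc', mul_comm a b, mul_div_assoc, div_self hapos.ne', mul_one]
    have hmul := mul_le_mul_of_nonneg_left hkey (Real.rpow_nonneg hapos.le η)
    have e1 : a ^ η * (1 + t) ^ η = (a + b) ^ η := by
      rw [← Real.mul_rpow hapos.le (by linarith), hat]
    have e2 : a ^ η * t = a ^ (η - 1) * b := by
      rw [htdef, Real.rpow_sub hapos, Real.rpow_one]
      field_simp
    have e3 : a ^ η * t ^ η = b ^ η := by
      rw [← Real.mul_rpow hapos.le ht0, htdef]
      congr 1
      field_simp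
    have hfin : a ^ η + η ^ 2 / (η + 1) * a ^ (η - 1) * b
        + (2 ^ η - η ^ 2 / (η + 1) - 1) * b ^ η ≤ (a + b) ^ η := by
      calc a ^ η + η ^ 2 / (η + 1) * a ^ (η - 1) * b
          + (2 ^ η - η ^ 2 / (η + 1) - 1) * b ^ η
          = a ^ η * (1 + η ^ 2 / (η + 1) * t + (2 ^ η - η ^ 2 / (η + 1) - 1) * t ^ η) := by
            rw [mul_add, mul_add, mul_one]
            rw [show a ^ η * (η ^ 2 / (η + 1) * t) = η ^ 2 / (η + 1) * (a ^ η * t) by ring, e2]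
            rw [show a ^ η * ((2 ^ η - η ^ 2 / (η + 1) - 1) * t ^ η)
              = (2 ^ η - η ^ 2 / (η + 1) - 1) * (a ^ η * t ^ η) by ring, e3]
            ring
        _ ≤ a ^ η * (1 + t) ^ η := hmul
        _ = (a + b) ^ η := e1
    have hmono : (a + b) ^ η ≤ c ^ η :=
      Real.rpow_le_rpow (by linarith) hc hηpos.le
    linarith
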